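/- The number of connected subgraphs with m vertices containing a fixed vertex in a graph of maximum degree Δ is at most (eΔ)^m. -/

import Mathlib

open Classical in
/-- possible child produced at step `k` with label `ℓ`, given current list `L`. -/
noncomputable def batchFun {V : Type*} (nbr : V → List V) (S : Finset V)
    (L : List V) (k ℓ : ℕ) : Option V :=
  match L[k]? with
  | none => none
  | some u =>
    match (nbr u)[ℓ]? with
    | none => none
    | some w => if w ∈ S ∧ w ∉ L then some w else none

open Classical in
noncomputable def explore {V : Type*} (nbr : V → List V) (S : Finset V) (v : V)
    (Δ : ℕ) : ℕ → List V
  | 0 => [v]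
  | k+1 =>
    let L := explore nbr S v Δ k
    L ++ (List.range Δ).filterMap (batchFun nbr S L k)

open Classical in
noncomputable def replay {V : Type*} (nbr : V → List V) (T : Finset (ℕ × ℕ)) (v : V)
    (Δ : ℕ) : ℕ → List V
  | 0 => [v]
  | k+1 =>
    let L := replay nbr T v Δ k
    L ++ (List.range Δ).filterMap
      (fun ℓ => if (k, ℓ) ∈ T then L[k]?.bind (fun u => (nbr u)[ℓ]?) else none)

open Classical in
noncomputable def codeOf {V : Type*} (nbr : V → List V) (S : Finset V) (v : V)
    (Δ m : ℕ) : Finset (ℕ × ℕ) :=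
  (Finset.range m ×ˢ Finset.range Δ).filter
    (fun p => (batchFun nbr S (explore nbr S v Δ p.1) p.1 p.2).isSome)

section lemmas

variable {V : Type*} (nbr : V → List V) (S : Finset V) (v : V) (Δ : ℕ)

lemma batchFun_eq_some {L : List V} {k ℓ : ℕ} {w : V} :
    batchFun nbr S L k ℓ = some w ↔
      ∃ u, L[k]? = some u ∧ (nbr u)[ℓ]? = some w ∧ w ∈ S ∧ w ∉ L := by
  unfold batchFun
  rcases h : L[k]? with _ | u <;> simp only [h]
  · simp
  · rcases h2 : (nbr u)[ℓ]? with _ | x <;> simp only [h2]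
    · simp [h2]
    · by_cases hc : x ∈ S ∧ x ∉ L
      · simp only [if_pos hc]
        constructor
        · rintro h'; obtain rfl : x = w := by simpa using h'
          exact ⟨u, rfl, h2, hc⟩
        · rintro ⟨u', hu', h2', -⟩
          obtain rfl : u = u' := by simpa using hu'
          rw [h2] at h2'; simpa using h2'
      · simp only [if_neg hc]
        constructor
        · rintro ⟨⟩
        · rintro ⟨u', hu', h2', hw⟩
          obtain rfl : u = u' := by simpa using hu'
          rw [h2] at h2'
          obtain rfl : x = w := by simpa using h2'
          exact absurd hw hc

lemma explore_prefix (k : ℕ) : explore nbr S v Δ k <+: explore nbr S v Δ (k+1) := by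
  simp [explore]

lemma explore_prefix_le {k K : ℕ} (h : k ≤ K) :
    explore nbr S v Δ k <+: explore nbr S v Δ K := by
  induction K with
  | zero => simp_all
  | succ K ih =>
    rcases Nat.lt_or_ge k (K+1) with h' | h'
    · exact (ih (by omega)).trans (explore_prefix nbr S v Δ K)
    · have : k = K + 1 := by omega
      simp [this]

lemma mem_explore_of_mem_batch {L : List V} {k : ℕ} {w : V}
    (hw : w ∈ (List.range Δ).filterMap (batchFun nbr S L k)) :
    w ∈ S ∧ w ∉ L := by
  rcases List.mem_filterMap.mp hw with ⟨ℓ, -, hℓ⟩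
  rcases (batchFun_eq_some nbr S).mp hℓ with ⟨u, -, -, h1, h2⟩
  exact ⟨h1, h2⟩

lemma explore_subset (hv : v ∈ S) (k : ℕ) : ∀ w ∈ explore nbr S v Δ k, w ∈ S := by
  induction k with
  | zero => simpa [explore] using hv
  | succ k ih =>
    intro w hw
    rcases List.mem_append.mp hw with h | h
    · exact ih w h
    · exact (mem_explore_of_mem_batch nbr S Δ h).1

lemma explore_nodup (hnod : ∀ w, (nbr w).Nodup) (k : ℕ) : (explore nbr S v Δ k).Nodup := by
  induction k with
  | zero => simp [explore]
  | succ k ih =>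
    rw [explore]
    refine List.Nodup.append ih ?_ ?_
    · refine List.Nodup.filterMap ?_ List.nodup_range
      intro a a' b hb hb'
      rcases (batchFun_eq_some nbr S).mp hb with ⟨u, hu, h1, -, -⟩
      rcases (batchFun_eq_some nbr S).mp hb' with ⟨u', hu', h1', -, -⟩
      rw [hu] at hu'
      obtain rfl : u = u' := by simpa using hu'
      have la : a < (nbr u).length := (List.getElem?_eq_some_iff.mp h1).1
      exact (List.getElem?_inj la (hnod u)).mp (h1.trans h1'.symm)
    · intro w hw hw'
      exact (mem_explore_of_mem_batch nbr S Δ hw').2 hw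

lemma explore_stab {k : ℕ} (h : (explore nbr S v Δ k).length ≤ k) :
    ∀ K, k ≤ K → explore nbr S v Δ K = explore nbr S v Δ k := by
  intro K hK
  induction K with
  | zero =>
    have : k = 0 := by omega
    simp [this]
  | succ K ih =>
    rcases Nat.lt_or_ge k (K+1) with h' | h'
    · have hKk := ih (by omega)
      rw [explore, hKk]
      have hnone : (explore nbr S v Δ k)[K]? = none := by
        refine List.getElem?_eq_none (by omega)
      have : (List.range Δ).filterMap (batchFun nbr S (explore nbr S v Δ k) K) = [] := by
        refine List.filterMap_eq_nil_iff.mpr ?_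
        intro ℓ _
        unfold batchFun
        rw [hnone]
      simp [this]
    · have : k = K + 1 := by omega
      simp [this]

lemma explore_length_gt (k : ℕ) {m : ℕ} (hk : k < (explore nbr S v Δ m).length)
    (hkm : k ≤ m) : k < (explore nbr S v Δ k).length := by
  by_contra h
  push_neg at h
  have := explore_stab nbr S v Δ h m hkm
  rw [this] at hk
  omega

end lemmas

section lemmas2

variable {V : Type*} (nbr : V → List V) (S : Finset V) (v : V) (Δ : ℕ)

lemma replay_codeOf {m : ℕ} : ∀ k ≤ m,
    replay nbr (codeOf nbr S v Δ m) v Δ k = explore nbr S v Δ k := by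
  intro k
  induction k with
  | zero => intro _; simp [replay, explore]
  | succ k ih =>
    intro hk
    rw [replay, explore, ih (by omega)]
    congr 1
    refine List.filterMap_congr ?_
    intro ℓ hℓ
    have hℓΔ : ℓ < Δ := List.mem_range.mp hℓ
    have hmem : (k, ℓ) ∈ codeOf nbr S v Δ m ↔
        (batchFun nbr S (explore nbr S v Δ k) k ℓ).isSome := by
      simp only [codeOf, Finset.mem_filter, Finset.mem_product, Finset.mem_range]
      constructor
      · rintro ⟨-, h⟩; exact h
      · intro h; exact ⟨⟨by omega, hℓΔ⟩, h⟩
    rcases hb : batchFun nbr S (explore nbr S v Δ k) k ℓ with _ | w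
    · rw [if_neg]
      rw [hmem, hb]
      simp
    · rw [if_pos (hmem.mpr (by rw [hb]; rfl))]
      rcases (batchFun_eq_some nbr S).mp hb with ⟨u, hu, h2, -⟩
      rw [hu]
      simpa using h2

variable (G : SimpleGraph V)

lemma explore_exhaust [DecidableEq V] {m : ℕ} (hv : v ∈ S) (hnod : ∀ w, (nbr w).Nodup)
    (hcov : ∀ u w, G.Adj u w → ∃ ℓ < Δ, (nbr u)[ℓ]? = some w)
    (hconn : (G.induce (S : Set V)).Connected) (hm : S.card = m) :
    (explore nbr S v Δ m).toFinset = S := by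
  set L := explore nbr S v Δ m with hL
  have hsub : ∀ w ∈ L, w ∈ S := explore_subset nbr S v Δ hv m
  have hnd : L.Nodup := explore_nodup nbr S v Δ hnod m
  have hsubF : L.toFinset ⊆ S := by intro w hw; exact hsub w (List.mem_toFinset.mp hw)
  have hlen : L.length ≤ m := by
    rw [← List.toFinset_card_of_nodup hnd] at *
    calc L.toFinset.card ≤ S.card := Finset.card_le_card hsubF
    _ = m := hm
  refine Finset.Subset.antisymm hsubF ?_
  by_contra hcon
  obtain ⟨w, hwS, hwL⟩ := Finset.not_subset.mp hcon
  have hwL' : w ∉ L := fun h => hwL (List.mem_toFinset.mpr h)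
  have hvL : v ∈ L := by
    have : v ∈ explore nbr S v Δ 0 := by simp [explore]
    exact (explore_prefix_le nbr S v Δ (Nat.zero_le m)).subset this
  -- find a crossing edge
  have hreach := hconn.preconnected ⟨v, hv⟩ ⟨w, hwS⟩
  obtain ⟨p⟩ := hreach
  obtain ⟨d, -, hd1, hd2⟩ := p.exists_boundary_dart {x | (x : V) ∈ L} hvL hwL'
  have hadj : G.Adj (d.fst : V) (d.snd : V) := d.adj
  set u : V := (d.fst : V)
  set x : V := (d.snd : V)
  have hxS : x ∈ S := d.snd.2
  have hxL : x ∉ L := hd2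
  obtain ⟨j, hj, hju⟩ := List.getElem_of_mem hd1
  have hjm : j ≤ m := by omega
  have hjlt : j < (explore nbr S v Δ j).length :=
    explore_length_gt nbr S v Δ j hj hjm
  have hgetj : (explore nbr S v Δ j)[j]? = some u := by
    rw [List.getElem?_eq_getElem hjlt]
    rw [(explore_prefix_le nbr S v Δ hjm).getElem hjlt]
    exact congrArg some hju
  obtain ⟨ℓ, hℓΔ, hnth⟩ := hcov u x hadj
  have hxj : x ∉ explore nbr S v Δ j := by
    intro hx
    exact hxL ((explore_prefix_le nbr S v Δ hjm).subset hx)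
  have hbatch : batchFun nbr S (explore nbr S v Δ j) j ℓ = some x :=
    (batchFun_eq_some nbr S).mpr ⟨u, hgetj, hnth, hxS, hxj⟩
  have hxj1 : x ∈ explore nbr S v Δ (j+1) := by
    rw [explore]
    refine List.mem_append.mpr (Or.inr ?_)
    exact List.mem_filterMap.mpr ⟨ℓ, List.mem_range.mpr hℓΔ, hbatch⟩
  have hj1m : j + 1 ≤ m := by omega
  exact hxL ((explore_prefix_le nbr S v Δ hj1m).subset hxj1)

end lemmas2

section lemmas3

lemma card_filter_range_eq {β : Type*} (f : ℕ → Option β) (n : ℕ) :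
    ((Finset.range n).filter (fun ℓ => (f ℓ).isSome)).card
      = ((List.range n).filterMap f).length := by
  induction n with
  | zero => simp
  | succ n ih =>
    rw [Finset.range_add_one, List.range_succ, Finset.filter_insert, List.filterMap_append]
    rcases h : f n with _ | b
    · rw [if_neg (by simp [h])]
      simp [h, ih]
    · rw [if_pos (by simp [h])]
      rw [Finset.card_insert_of_notMem (by simp)]
      simp [h, ih]

variable {V : Type*} (nbr : V → List V) (S : Finset V) (v : V) (Δ : ℕ)

lemma codeOf_fiber {m k : ℕ} (hkm : k < m) :
    ((codeOf nbr S v Δ m).filter (fun p => p.1 = k)).card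
      = ((List.range Δ).filterMap (batchFun nbr S (explore nbr S v Δ k) k)).length := by
  classical
  have himg : (codeOf nbr S v Δ m).filter (fun p => p.1 = k)
      = ((Finset.range Δ).filter
          (fun ℓ => (batchFun nbr S (explore nbr S v Δ k) k ℓ).isSome)).image
          (fun ℓ => (k, ℓ)) := by
    ext ⟨a, b⟩
    simp only [Finset.mem_filter, Finset.mem_image, codeOf, Finset.mem_product,
      Finset.mem_range, Prod.mk.injEq]
    constructor
    · rintro ⟨⟨⟨ha, hb⟩, hs⟩, rfl⟩
      exact ⟨b, ⟨hb, hs⟩, rfl, rfl⟩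
    · rintro ⟨ℓ, ⟨hℓ, hs⟩, rfl, rfl⟩
      exact ⟨⟨⟨hkm, hℓ⟩, hs⟩, rfl⟩
  rw [himg, Finset.card_image_of_injective _ (fun a b h => by simpa using h)]
  exact card_filter_range_eq _ _

lemma codeOf_card_aux {m : ℕ} : ∀ k ≤ m,
    ((codeOf nbr S v Δ m).filter (fun p => p.1 < k)).card + 1
      = (explore nbr S v Δ k).length := by
  intro k
  induction k with
  | zero =>
    intro _
    rw [Finset.filter_false_of_mem (fun p _ => by omega)]
    simp [explore]
  | succ k ih =>
    intro hk
    classical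
    have hsplit : (codeOf nbr S v Δ m).filter (fun p => p.1 < k + 1)
        = (codeOf nbr S v Δ m).filter (fun p => p.1 < k)
            ∪ (codeOf nbr S v Δ m).filter (fun p => p.1 = k) := by
      ext p
      simp only [Finset.mem_filter, Finset.mem_union]
      constructor
      · rintro ⟨hp, h⟩
        rcases Nat.lt_or_ge p.1 k with h' | h'
        · exact Or.inl ⟨hp, h'⟩
        · exact Or.inr ⟨hp, by omega⟩
      · rintro (⟨hp, h⟩ | ⟨hp, h⟩) <;> exact ⟨hp, by omega⟩
    have hdisj : Disjoint ((codeOf nbr S v Δ m).filter (fun p => p.1 < k))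
        ((codeOf nbr S v Δ m).filter (fun p => p.1 = k)) := by
      rw [Finset.disjoint_left]
      intro p hp1 hp2
      simp only [Finset.mem_filter] at hp1 hp2
      omega
    have hlen : (explore nbr S v Δ (k+1)).length
        = (explore nbr S v Δ k).length
          + ((List.range Δ).filterMap (batchFun nbr S (explore nbr S v Δ k) k)).length := by
      rw [explore]
      exact List.length_append
    rw [hsplit, Finset.card_union_of_disjoint hdisj, hlen,
      ← ih (by omega), codeOf_fiber nbr S v Δ (by omega : k < m)]
    omega

lemma codeOf_card {m : ℕ} :
    (codeOf nbr S v Δ m).card + 1 = (explore nbr S v Δ m).length := by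
  classical
  have : (codeOf nbr S v Δ m).filter (fun p => p.1 < m) = codeOf nbr S v Δ m := by
    refine Finset.filter_true_of_mem ?_
    intro p hp
    have := Finset.mem_filter.mp hp
    have := Finset.mem_product.mp this.1
    simpa using this.1
  rw [← this]
  exact codeOf_card_aux nbr S v Δ m le_rfl

end lemmas3

section arith

lemma pow_self_le_exp_mul_factorial : ∀ n : ℕ, (n : ℝ) ^ n ≤ Real.exp 1 ^ n * n.factorial := by
  intro n
  induction n with
  | zero => simp
  | succ n ih =>
    rcases Nat.eq_zero_or_pos n with rfl | hn
    · simpa using Real.one_le_exp (by norm_num)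
    have hn0 : (0:ℝ) < n := by exact_mod_cast hn
    have hexp : ((n:ℝ) + 1) ≤ n * Real.exp (1/n) := by
      have h := Real.add_one_le_exp (1/(n:ℝ))
      have := mul_le_mul_of_nonneg_left h (le_of_lt hn0)
      have hcancel : (n:ℝ) * (1/n) = 1 := by field_simp
      nlinarith
    have hpow : ((n:ℝ) + 1) ^ n ≤ Real.exp 1 * (n:ℝ) ^ n := by
      calc ((n:ℝ) + 1) ^ n ≤ ((n:ℝ) * Real.exp (1/n)) ^ n := by
            refine pow_le_pow_left₀ (by positivity) hexp n
        _ = (n:ℝ) ^ n * Real.exp (1/n) ^ n := mul_pow _ _ _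
        _ = (n:ℝ) ^ n * Real.exp 1 := by
            rw [← Real.exp_nat_mul]
            congr 1
            field_simp
        _ = Real.exp 1 * (n:ℝ) ^ n := mul_comm _ _
    have hfact : ((n+1 : ℕ).factorial : ℝ) = (n+1 : ℝ) * n.factorial := by
      rw [Nat.factorial_succ]; push_cast; ring
    have hexp1 : (0:ℝ) < Real.exp 1 := Real.exp_pos 1
    calc ((n+1 : ℕ) : ℝ) ^ (n+1) = ((n:ℝ)+1) * ((n:ℝ)+1) ^ n := by push_cast; ring
      _ ≤ ((n:ℝ)+1) * (Real.exp 1 * (n:ℝ) ^ n) := by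
          refine mul_le_mul_of_nonneg_left hpow (by positivity)
      _ ≤ ((n:ℝ)+1) * (Real.exp 1 * (Real.exp 1 ^ n * n.factorial)) := by
          refine mul_le_mul_of_nonneg_left (mul_le_mul_of_nonneg_left ih (le_of_lt hexp1))
            (by positivity)
      _ = Real.exp 1 ^ (n+1) * ((n+1:ℝ) * n.factorial) := by ring
      _ = Real.exp 1 ^ (n+1) * ((n+1 : ℕ).factorial : ℝ) := by rw [hfact]

lemma choose_bound {Δ m : ℕ} (hΔ : 1 ≤ Δ) (hm : 1 ≤ m) :
    ((Nat.choose (m * Δ) (m-1) : ℕ) : ℝ) ≤ (Real.exp 1 * Δ) ^ m := by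
  have h1 : ((Nat.choose (m * Δ) (m-1) : ℕ) : ℝ)
      ≤ ((m * Δ : ℕ) : ℝ) ^ (m-1) / (m-1).factorial :=
    Nat.choose_le_pow_div _ _
  refine h1.trans ?_
  have hfac : (0:ℝ) < ((m-1).factorial : ℝ) := by exact_mod_cast (m-1).factorial_pos
  rw [div_le_iff₀ hfac]
  have hm0 : (0:ℝ) < m := by exact_mod_cast hm
  have hΔ0 : (1:ℝ) ≤ Δ := by exact_mod_cast hΔ
  have h2 : ((m:ℝ)) ^ (m-1) ≤ Real.exp 1 ^ m * (m-1).factorial := by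
    have h3 := pow_self_le_exp_mul_factorial m
    have hpow : (m:ℝ) ^ m = (m:ℝ) ^ (m-1) * m := by
      rw [← pow_succ]
      congr 1
      omega
    have hfm : (m.factorial : ℝ) = m * (m-1).factorial := by
      rw [← Nat.mul_factorial_pred (by omega : m ≠ 0)]
      push_cast
      ring
    rw [hpow, hfm] at h3
    have := le_of_mul_le_mul_right (by linarith [h3] : (m:ℝ)^(m-1) * m ≤ (Real.exp 1 ^ m * (m-1).factorial) * m) hm0
    linarith
  have hΔpow : ((Δ:ℝ)) ^ (m-1) ≤ (Δ:ℝ) ^ m :=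
    pow_le_pow_right₀ hΔ0 (by omega)
  calc ((m * Δ : ℕ) : ℝ) ^ (m-1) = (m:ℝ) ^ (m-1) * (Δ:ℝ) ^ (m-1) := by
        push_cast; rw [mul_pow]
    _ ≤ (Real.exp 1 ^ m * (m-1).factorial) * (Δ:ℝ) ^ (m-1) := by
        refine mul_le_mul_of_nonneg_right h2 (by positivity)
    _ ≤ (Real.exp 1 ^ m * (m-1).factorial) * (Δ:ℝ) ^ m := by
        refine mul_le_mul_of_nonneg_left hΔpow (by positivity)
    _ = (Real.exp 1 * Δ) ^ m * (m-1).factorial := by rw [mul_pow]; ring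

end arith

/-- The number of connected `m`-element vertex subsets containing a fixed vertex `v`
in a (possibly infinite) graph of maximum degree `Δ ≥ 1` is at most `(e·Δ)^m`. -/
theorem stmt_0 {V : Type*} (G : SimpleGraph V) (Δ : ℕ) (hΔ : 1 ≤ Δ)
    (hlf : ∀ w : V, (G.neighborSet w).Finite)
    (hdeg : ∀ w : V, (G.neighborSet w).ncard ≤ Δ)
    (v : V) (m : ℕ) :
    {s : Finset V | v ∈ s ∧ s.card = m ∧ (G.induce (s : Set V)).Connected}.Finite ∧
      (({s : Finset V | v ∈ s ∧ s.card = m ∧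
          (G.induce (s : Set V)).Connected}.ncard : ℝ))
        ≤ (Real.exp 1 * Δ) ^ m := by
  classical
  rcases Nat.eq_zero_or_pos m with rfl | hm
  · have hempty : {s : Finset V | v ∈ s ∧ s.card = 0 ∧ (G.induce (s : Set V)).Connected}
        = (∅ : Set (Finset V)) := by
      ext s
      simp only [Set.mem_setOf_eq, Set.mem_empty_iff_false, iff_false, not_and]
      intro hv h0
      exact absurd (Finset.card_eq_zero.mp h0 ▸ hv) (Finset.notMem_empty v)
    rw [hempty]
    simp
  · set nbr : V → List V := fun w => (hlf w).toFinset.toList with hnbr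
    have hnod : ∀ w, (nbr w).Nodup := fun w => Finset.nodup_toList _
    have hcov : ∀ u w, G.Adj u w → ∃ ℓ < Δ, (nbr u)[ℓ]? = some w := by
      intro u w hadj
      have hw : w ∈ (hlf u).toFinset := (hlf u).mem_toFinset.mpr hadj
      have hw' : w ∈ nbr u := Finset.mem_toList.mpr hw
      obtain ⟨ℓ, hℓ, hget⟩ := List.mem_iff_getElem.mp hw'
      have hlenΔ : (nbr u).length ≤ Δ := by
        rw [Finset.length_toList]
        rw [← Set.ncard_eq_toFinset_card _ (hlf u)]
        exact hdeg u
      exact ⟨ℓ, by omega, by rw [List.getElem?_eq_getElem hℓ, hget]⟩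
    set 𝒮 := {s : Finset V | v ∈ s ∧ s.card = m ∧ (G.induce (s : Set V)).Connected} with h𝒮
    set Tspace := Finset.powersetCard (m-1) (Finset.range m ×ˢ Finset.range Δ) with hTs
    set dec : Finset (ℕ × ℕ) → Finset V := fun T => (replay nbr T v Δ m).toFinset with hdec
    have hsub : 𝒮 ⊆ dec '' ↑Tspace := by
      rintro s ⟨hvs, hcard, hconn⟩
      have hx := explore_exhaust nbr s v Δ G hvs hnod hcov hconn hcard
      have hlenm : (explore nbr s v Δ m).length = m := by
        rw [← List.toFinset_card_of_nodup (explore_nodup nbr s v Δ hnod m), hx, hcard]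
      refine ⟨codeOf nbr s v Δ m, ?_, ?_⟩
      · rw [Finset.mem_coe, hTs, Finset.mem_powersetCard]
        constructor
        · exact Finset.filter_subset _ _
        · have := codeOf_card nbr s v Δ (m := m)
          omega
      · show (replay nbr (codeOf nbr s v Δ m) v Δ m).toFinset = s
        rw [replay_codeOf nbr s v Δ m le_rfl, hx]
    have hfin : 𝒮.Finite := Set.Finite.subset (Set.Finite.image _ (Finset.finite_toSet _)) hsub
    refine ⟨hfin, ?_⟩
    have h1 : 𝒮.ncard ≤ Tspace.card := by
      calc 𝒮.ncard ≤ (dec '' ↑Tspace).ncard :=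
            Set.ncard_le_ncard hsub (Set.Finite.image _ (Finset.finite_toSet _))
        _ ≤ (↑Tspace : Set (Finset (ℕ × ℕ))).ncard := Set.ncard_image_le (Finset.finite_toSet _)
        _ = Tspace.card := Set.ncard_coe_finset _
    have h2 : Tspace.card = Nat.choose (m * Δ) (m-1) := by
      rw [hTs, Finset.card_powersetCard, Finset.card_product, Finset.card_range,
        Finset.card_range]
    calc (𝒮.ncard : ℝ) ≤ ((Nat.choose (m * Δ) (m-1) : ℕ) : ℝ) := by
          exact_mod_cast h2 ▸ h1
      _ ≤ (Real.exp 1 * Δ) ^ m := choose_bound hΔ hm
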